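/- Monadic bind is well defined on the powerdomain: if X ∈ P⋆(S) and f : S → Set (Option T) satisfies f a ∈ P⋆(T) for every a : S, then lift f X ∈ P⋆(T), i.e., if lift f X is infinite then none ∈ lift f X. -/

import Mathlib

/-- The powerdomain `P⋆(S)`: subsets of `Option S` that contain `none` if infinite. -/
def Pstar (S : Type*) : Set (Set (Option S)) :=
  {X | X.Infinite → none ∈ X}

open Classical in
/-- Monadic bind on the powerdomain: `∅` if some value in `X` is mapped to the error
value `∅`; otherwise the union of the results, keeping `none` if `none ∈ X`. -/
noncomputable def lift {S T : Type*} (f : S → Set (Option T)) (X : Set (Option S)) :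
    Set (Option T) :=
  if ∃ a : S, some a ∈ X ∧ f a = ∅ then ∅
  else {x | x = none ∧ none ∈ X} ∪ ⋃ (a : S) (_ : some a ∈ X), f a

theorem lift_mem_pstar {S T : Type*} (f : S → Set (Option T)) (X : Set (Option S))
    (hX : X ∈ Pstar S) (hf : ∀ a : S, f a ∈ Pstar T) :
    lift f X ∈ Pstar T := by
  intro hinf
  unfold lift at *
  split at hinf
  · exact absurd hinf (by simp [Set.not_infinite])
  · rename_i herr
    split
    · exact absurd ‹_› herr
    by_cases hn : none ∈ X
    · exact Or.inl ⟨rfl, hn⟩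
    · -- X is finite
      have hXfin : X.Finite := by
        by_contra h
        exact hn (hX (Set.not_infinite.not.mp (by simpa using h)))
      have hIfin : {a : S | some a ∈ X}.Finite := by
        have : Set.InjOn (some : S → Option S) {a | some a ∈ X} := fun a _ b _ h => by
          injection h
        exact Set.Finite.of_finite_image (hXfin.subset (by rintro _ ⟨a, ha, rfl⟩; exact ha)) this
      have : ({x : Option T | x = none ∧ none ∈ X} ∪
          ⋃ (a : S) (_ : some a ∈ X), f a).Infinite → ∃ a, some a ∈ X ∧ (f a).Infinite := by
        intro hi
        by_contra hc
        push_neg at hc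
        apply hi
        apply Set.Finite.union
        · exact (Set.finite_singleton (none : Option T)).subset (by rintro x ⟨rfl, _⟩; rfl)
        · exact hIfin.biUnion fun a ha => hc a ha
      obtain ⟨a, ha, hfa⟩ := this hinf
      exact Or.inr (Set.mem_biUnion ha (hf a hfa))
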